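/- Let K be a p-adic field, L/K weakly ramified abelian of odd degree, and L'/L a finite unramified extension with L'/K abelian and weakly ramified. Then Tr_{L'/L}(A_{L'/K}) ⊆ A_{L/K}; in fact A_{L'/K} = A_{L/K}·O_{L'}. Consequently, if x' is a self-dual integral normal basis generator of A_{L'/K}, then Tr_{L'/L}(x') is a self-dual integral normal basis generator of A_{L/K}. -/

import Mathlib

open scoped Classical
set_option synthInstance.maxHeartbeats 1000000
set_option maxHeartbeats 4000000

theorem aux_sq_one (R S : Type*) [CommRing R] [CommRing S] [Algebra R S]
    (X : Submodule (integralClosure R S) S) (hX : X * X = 1) : X = 1 := by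
  have hle : X ≤ 1 := by
    intro x hx
    have h2 : x * x ∈ (1 : Submodule (integralClosure R S) S) := by
      rw [← hX]; exact Submodule.mul_mem_mul hx hx
    rw [Submodule.mem_one] at h2 ⊢
    obtain ⟨y, hy⟩ := h2
    have hint : IsIntegral R (x * x) := by
      rw [← hy]; exact (y.2 : IsIntegral R (y : S))
    have : IsIntegral R x := by
      refine IsIntegral.of_pow (n := 2) two_pos ?_
      rwa [pow_two]
    exact ⟨⟨x, this⟩, rfl⟩
  refine le_antisymm hle (le_trans (le_of_eq hX.symm) ?_)
  refine le_trans (mul_le_mul' hle (le_refl X)) ?_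
  rw [one_mul]

theorem aux_inv (R M : Type*) [CommRing R] [IsDedekindDomain R] [Field M]
    [Algebra R M] [IsFractionRing R M]
    (I : Submodule R M) (hfrac : IsFractional (nonZeroDivisors R) I) (h1 : (1 : M) ∈ I) :
    ∃ E : Submodule R M, I * E = 1 := by
  set Ihat : FractionalIdeal (nonZeroDivisors R) M := ⟨I, hfrac⟩ with hIhat
  have hco : (Ihat : Submodule R M) = I := rfl
  have hne : Ihat ≠ 0 := by
    intro h
    have : (1 : M) ∈ (Ihat : Submodule R M) := h1
    rw [h] at this
    simp at this
  refine ⟨(Ihat⁻¹ : FractionalIdeal (nonZeroDivisors R) M), ?_⟩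
  rw [← hco, ← FractionalIdeal.coe_mul, mul_inv_cancel₀ hne,
    FractionalIdeal.coe_one]

open Algebra in
theorem aux_fractional (p : ℕ) [Fact p.Prime]
    (K : Type*) [Field K] [Algebra ℤ_[p] K] [CharZero K]
    (M : Type*) [Field M] [Algebra K M] [FiniteDimensional K M]
    [Algebra ℤ_[p] M] [IsScalarTower ℤ_[p] K M]
    [Algebra ℚ_[p] M] [IsScalarTower ℤ_[p] ℚ_[p] M] [FiniteDimensional ℚ_[p] M]
    (I : Submodule (integralClosure ℤ_[p] M) M)
    (hI : ∀ z ∈ I, ∀ y : M, IsIntegral ℤ_[p] y →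
      Algebra.trace K M (z * y) ∈ integralClosure ℤ_[p] K) :
    IsFractional (nonZeroDivisors (integralClosure ℤ_[p] M)) I := by
  classical
  have hinjM : Function.Injective (algebraMap ℤ_[p] M) := by
    rw [IsScalarTower.algebraMap_eq ℤ_[p] ℚ_[p] M]
    exact (algebraMap ℚ_[p] M).injective.comp (IsFractionRing.injective ℤ_[p] ℚ_[p])
  set b₀ := Module.finBasis K M with hb₀
  obtain ⟨y, hy0, hy⟩ := exists_integral_multiples ℤ_[p] ℚ_[p] (Finset.univ.image b₀)
  have hyK : IsUnit (algebraMap ℤ_[p] K y) := by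
    refine isUnit_iff_ne_zero.mpr fun h => hy0 (hinjM ?_)
    rw [IsScalarTower.algebraMap_eq ℤ_[p] K M, RingHom.comp_apply, h, map_zero, map_zero]
  set b := b₀.isUnitSMul (fun _ => hyK) with hb
  have hbint : ∀ i, IsIntegral ℤ_[p] (b i) := by
    intro i
    rw [hb, Module.Basis.isUnitSMul_apply, algebraMap_smul]
    exact hy _ (Finset.mem_image_of_mem _ (Finset.mem_univ i))
  set db := (Algebra.traceForm K M).dualBasis (traceForm_nondegenerate K M) b with hdb
  obtain ⟨e, he0, he⟩ := exists_integral_multiples ℤ_[p] ℚ_[p] (Finset.univ.image db)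
  refine ⟨⟨algebraMap ℤ_[p] M e, isIntegral_algebraMap⟩, ?_, ?_⟩
  · refine mem_nonZeroDivisors_of_ne_zero fun h => he0 ?_
    have : algebraMap ℤ_[p] M e = 0 := congrArg Subtype.val h
    exact hinjM (by simpa using this)
  · intro z hz
    have hz_expand : z = ∑ i, Algebra.trace K M (z * b i) • db i := by
      conv_lhs => rw [← db.sum_repr z]
      refine Finset.sum_congr rfl fun i _ => ?_
      rw [hdb, LinearMap.BilinForm.dualBasis_repr_apply]
      rfl
    refine ⟨⟨_, ?_⟩, rfl⟩
    show IsIntegral ℤ_[p] ((⟨algebraMap ℤ_[p] M e, _⟩ : integralClosure ℤ_[p] M) • z)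
    have : (⟨algebraMap ℤ_[p] M e, isIntegral_algebraMap⟩ :
        integralClosure ℤ_[p] M) • z = e • z := by
      rw [Algebra.smul_def]
      show algebraMap ℤ_[p] M e * z = _
      rw [Algebra.smul_def]
    rw [this, hz_expand, Finset.smul_sum]
    refine IsIntegral.sum _ fun i _ => ?_
    rw [smul_comm, Algebra.smul_def]
    refine IsIntegral.mul ?_ ?_
    · have := hI z hz (b i) (hbint i)
      exact IsIntegral.map (IsScalarTower.toAlgHom ℤ_[p] K M) this
    · exact he _ (Finset.mem_image_of_mem _ (Finset.mem_univ i))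

/-- Let `K` be a `p`-adic field, `L/K` abelian of odd degree and weakly
ramified, and `L'/L` finite unramified (encoded: the trace dual of `O_{L'}` over `L` is
`O_{L'}`) with `L'/K` abelian. With `A = A_{L/K}` and `A' = A_{L'/K}` the square roots of
the inverse differents, one has `Tr_{L'/L}(A') ⊆ A`, in fact `A' = A·O_{L'}`; consequently
if `x'` is a self-dual integral normal basis generator of `A'`, then `Tr_{L'/L}(x')` is a
self-dual integral normal basis generator of `A`. -/
theorem stmt_19 (p : ℕ) [Fact p.Prime]
    (K : Type*) [Field K] [Algebra ℚ_[p] K] [FiniteDimensional ℚ_[p] K]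
    [Algebra ℤ_[p] K] [IsScalarTower ℤ_[p] ℚ_[p] K]
    (L : Type*) [Field L] [Algebra K L] [FiniteDimensional K L] [IsGalois K L]
    [Algebra ℤ_[p] L] [IsScalarTower ℤ_[p] K L]
    (L' : Type*) [Field L'] [Algebra K L'] [Algebra L L'] [IsScalarTower K L L']
    [FiniteDimensional K L'] [IsGalois K L']
    [Algebra ℤ_[p] L'] [IsScalarTower ℤ_[p] K L'] [IsScalarTower ℤ_[p] L L']
    (hodd : Odd (Module.finrank K L))
    (hab : ∀ σ τ : L ≃ₐ[K] L, σ * τ = τ * σ)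
    (hab' : ∀ σ τ : L' ≃ₐ[K] L', σ * τ = τ * σ)
    -- `L'/L` is unramified: the trace dual of `O_{L'}` over `L` is `O_{L'}` itself
    (hunram : ∀ z : L',
      (∀ y : L', y ∈ integralClosure ℤ_[p] L' →
        Algebra.trace L L' (z * y) ∈ integralClosure ℤ_[p] L) ↔
      z ∈ integralClosure ℤ_[p] L')
    (A : Submodule (integralClosure ℤ_[p] L) L)
    (hA : ∀ z : L, z ∈ A * A ↔
      ∀ y : L, y ∈ integralClosure ℤ_[p] L →
        Algebra.trace K L (z * y) ∈ integralClosure ℤ_[p] K)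
    (A' : Submodule (integralClosure ℤ_[p] L') L')
    (hA' : ∀ z : L', z ∈ A' * A' ↔
      ∀ y : L', y ∈ integralClosure ℤ_[p] L' →
        Algebra.trace K L' (z * y) ∈ integralClosure ℤ_[p] K) :
    (∀ z : L', z ∈ A' → Algebra.trace L L' z ∈ A) ∧
    ((A' : Set L') =
      ↑(Submodule.span (integralClosure ℤ_[p] L') (algebraMap L L' '' (A : Set L)))) ∧
    ∀ x' : L', x' ∈ A' →
      ((A' : Set L') = {z : L' | ∃ c : (L' ≃ₐ[K] L') → K,
        (∀ g, c g ∈ integralClosure ℤ_[p] K) ∧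
        z = ∑ g : L' ≃ₐ[K] L', c g • g x'}) →
      (∀ g h : L' ≃ₐ[K] L',
        Algebra.trace K L' (g x' * h x') = if g = h then 1 else 0) →
      (Algebra.trace L L' x' ∈ A ∧
        ((A : Set L) = {z : L | ∃ c : (L ≃ₐ[K] L) → K,
          (∀ g, c g ∈ integralClosure ℤ_[p] K) ∧
          z = ∑ g : L ≃ₐ[K] L, c g • g (Algebra.trace L L' x')}) ∧
        ∀ g h : L ≃ₐ[K] L,
          Algebra.trace K L (g (Algebra.trace L L' x') * h (Algebra.trace L L' x')) =
            if g = h then 1 else 0) := by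
  classical
  -- ℚ_[p]-algebra structures on L and L'
  letI : Algebra ℚ_[p] L := ((algebraMap K L).comp (algebraMap ℚ_[p] K)).toAlgebra
  haveI : IsScalarTower ℚ_[p] K L := IsScalarTower.of_algebraMap_eq fun x => rfl
  haveI : IsScalarTower ℤ_[p] ℚ_[p] L := IsScalarTower.of_algebraMap_eq fun x => by
    rw [IsScalarTower.algebraMap_apply ℤ_[p] K L,
      IsScalarTower.algebraMap_apply ℤ_[p] ℚ_[p] K]
    rfl
  haveI : FiniteDimensional ℚ_[p] L := Module.Finite.trans K L
  letI : Algebra ℚ_[p] L' := ((algebraMap K L').comp (algebraMap ℚ_[p] K)).toAlgebra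
  haveI : IsScalarTower ℚ_[p] K L' := IsScalarTower.of_algebraMap_eq fun x => rfl
  haveI : IsScalarTower ℤ_[p] ℚ_[p] L' := IsScalarTower.of_algebraMap_eq fun x => by
    rw [IsScalarTower.algebraMap_apply ℤ_[p] K L',
      IsScalarTower.algebraMap_apply ℤ_[p] ℚ_[p] K]
    rfl
  haveI : FiniteDimensional ℚ_[p] L' := Module.Finite.trans K L'
  haveI : CharZero K := charZero_of_injective_algebraMap (algebraMap ℚ_[p] K).injective
  haveI : FiniteDimensional L L' := Module.Finite.of_restrictScalars_finite K L L'
  haveI : IsGalois L L' := IsGalois.tower_top_of_isGalois K L L'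
  haveI : IsDedekindDomain (integralClosure ℤ_[p] L) :=
    integralClosure.isDedekindDomain ℤ_[p] ℚ_[p] L
  haveI : IsDedekindDomain (integralClosure ℤ_[p] L') :=
    integralClosure.isDedekindDomain ℤ_[p] ℚ_[p] L'
  haveI : IsFractionRing (integralClosure ℤ_[p] L) L :=
    integralClosure.isFractionRing_of_finite_extension (A := ℤ_[p]) ℚ_[p] L
  haveI : IsFractionRing (integralClosure ℤ_[p] L') L' :=
    integralClosure.isFractionRing_of_finite_extension (A := ℤ_[p]) ℚ_[p] L'
  -- basic trace facts
  have hsmul_tr : ∀ (c : L) (u : L'),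
      Algebra.trace L L' (algebraMap L L' c * u) = c * Algebra.trace L L' u := by
    intro c u
    rw [← Algebra.smul_def, map_smul, smul_eq_mul]
  have h1L : (1 : L) ∈ A * A := by
    rw [hA]
    intro y hy
    rw [one_mul]
    exact Algebra.isIntegral_trace hy
  have h1L' : (1 : L') ∈ A' * A' := by
    rw [hA']
    intro y hy
    rw [one_mul]
    exact Algebra.isIntegral_trace hy
  -- invertibility of the duals
  obtain ⟨E, hE⟩ := aux_inv (integralClosure ℤ_[p] L) L (A * A)
    (aux_fractional p K L (A * A) (fun z hz y hy => (hA z).mp hz y hy)) h1L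
  obtain ⟨E', hE'⟩ := aux_inv (integralClosure ℤ_[p] L') L' (A' * A')
    (aux_fractional p K L' (A' * A') (fun z hz y hy => (hA' z).mp hz y hy)) h1L'
  have hEw : ∀ e ∈ E, ∀ w ∈ A * A, e * w ∈ integralClosure ℤ_[p] L := by
    intro e he w hw
    have hmem : e * w ∈ (1 : Submodule (integralClosure ℤ_[p] L) L) := by
      rw [← hE]
      rw [mul_comm e w]
      exact Submodule.mul_mem_mul hw he
    obtain ⟨o, ho⟩ := Submodule.mem_one.mp hmem
    rw [← ho]
    exact o.2
  -- transitivity of the trace dual  (hL2)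
  have hL2 : ∀ u : L', u ∈ A' * A' ↔
      ∀ y : L', y ∈ integralClosure ℤ_[p] L' → Algebra.trace L L' (u * y) ∈ A * A := by
    intro u
    rw [hA' u]
    constructor
    · intro h y hy
      rw [hA _]
      intro w hw
      have hyw : y * algebraMap L L' w ∈ integralClosure ℤ_[p] L' := by
        refine mul_mem hy ?_
        exact IsIntegral.map (IsScalarTower.toAlgHom ℤ_[p] L L') hw
      have heq : Algebra.trace L L' (u * y) * w
          = Algebra.trace L L' (u * (y * algebraMap L L' w)) := by
        rw [mul_comm (Algebra.trace L L' (u * y)) w, ← hsmul_tr w (u * y)]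
        ring_nf
      rw [heq, Algebra.trace_trace]
      exact h _ hyw
    · intro h y hy
      have h2 := (hA _).mp (h y hy) 1 (one_mem _)
      rw [mul_one] at h2
      rw [← Algebra.trace_trace (S := L)]
      exact h2
  -- span description of the image of the dual  (hL1)
  have hL1 : ∀ u : L',
      (∀ y : L', y ∈ integralClosure ℤ_[p] L' → Algebra.trace L L' (u * y) ∈ A * A) ↔
      u ∈ Submodule.span (integralClosure ℤ_[p] L')
        (algebraMap L L' '' ((A * A : Submodule (integralClosure ℤ_[p] L) L) : Set L)) := by
    intro u
    constructor
    · intro h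
      have h1 : (1 : L) ∈ (A * A) * E := by
        rw [hE]
        exact Submodule.mem_one.mpr ⟨1, map_one _⟩
      have key : ∀ w ∈ (A * A) * E, algebraMap L L' w * u ∈
          Submodule.span (integralClosure ℤ_[p] L')
            (algebraMap L L' '' ((A * A : Submodule (integralClosure ℤ_[p] L) L) : Set L)) := by
        intro w hw
        refine Submodule.mul_induction_on hw ?_ ?_
        · intro m hm e he
          have ho : algebraMap L L' e * u ∈ integralClosure ℤ_[p] L' := by
            rw [← hunram]
            intro y hy
            have : Algebra.trace L L' (algebraMap L L' e * u * y)
                = e * Algebra.trace L L' (u * y) := by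
              rw [mul_assoc, hsmul_tr]
            rw [this]
            exact hEw e he _ (h y hy)
          have : algebraMap L L' (m * e) * u
              = (⟨algebraMap L L' e * u, ho⟩ : integralClosure ℤ_[p] L') •
                algebraMap L L' m := by
            rw [map_mul]
            show _ = (algebraMap L L' e * u) * algebraMap L L' m
            ring
          rw [this]
          exact Submodule.smul_mem _ _ (Submodule.subset_span ⟨m, hm, rfl⟩)
        · intro x y hx hy
          rw [map_add, add_mul]
          exact add_mem hx hy
      have := key 1 h1
      rwa [map_one, one_mul] at this
    · intro h
      refine Submodule.span_induction ?_ ?_ ?_ ?_ h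
      · rintro x ⟨a, ha, rfl⟩ y hy
        rw [hsmul_tr a y]
        have heq2 : a * Algebra.trace L L' y =
            (⟨Algebra.trace L L' y, Algebra.isIntegral_trace hy⟩ :
              integralClosure ℤ_[p] L) • a := by
          rw [Algebra.smul_def]
          show _ = Algebra.trace L L' y * a
          ring
        rw [heq2]
        exact Submodule.smul_mem _ _ ha
      · intro y hy
        rw [zero_mul, map_zero]
        exact zero_mem _
      · intro x z hx hz ihx ihz y hy
        rw [add_mul, map_add]
        exact add_mem (ihx y hy) (ihz y hy)
      · intro o x hx ih y hy
        have heq : (o • x) * y = x * ((o : L') * y) := by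
          rw [Algebra.smul_def]
          show (o : L') * x * y = _
          ring
        rw [heq]
        exact ih _ (mul_mem o.2 hy)
  -- the span of the image of A
  set B := Submodule.span (integralClosure ℤ_[p] L') (algebraMap L L' '' (A : Set L)) with hBdef
  have hBB : B * B = Submodule.span (integralClosure ℤ_[p] L')
      (algebraMap L L' '' ((A * A : Submodule (integralClosure ℤ_[p] L) L) : Set L)) := by
    rw [hBdef, Submodule.span_mul_span]
    apply le_antisymm
    · rw [Submodule.span_le]
      rintro x hx
      obtain ⟨x₁, hx₁, x₂, hx₂, rfl⟩ := Set.mem_mul.mp hx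
      obtain ⟨a, ha, rfl⟩ := hx₁
      obtain ⟨b, hb, rfl⟩ := hx₂
      rw [← map_mul]
      exact Submodule.subset_span ⟨a * b, Submodule.mul_mem_mul ha hb, rfl⟩
    · rw [Submodule.span_le]
      rintro x ⟨w, hw, rfl⟩
      refine Submodule.mul_induction_on hw ?_ ?_
      · intro m hm n hn
        rw [map_mul]
        exact Submodule.subset_span
          (Set.mul_mem_mul ⟨m, hm, rfl⟩ ⟨n, hn, rfl⟩)
      · intro x y hx hy
        rw [map_add]
        exact add_mem hx hy
  have hAB : A' * A' = B * B := by
    rw [hBB]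
    ext u
    rw [hL2 u, hL1 u]
  -- conclude A' = B
  have hA'B : A' = B := by
    have hXX : (A' * (B * E')) * (A' * (B * E')) = 1 := by
      have hr : (A' * (B * E')) * (A' * (B * E'))
          = ((A' * A') * E') * ((B * B) * E') := by ring
      rw [hr, ← hAB, hE', one_mul]
    have hX1 : A' * (B * E') = 1 := aux_sq_one ℤ_[p] L' _ hXX
    have h2 : A' * (A' * (B * E')) = ((A' * A') * E') * B := by ring
    rw [hX1, hE', one_mul] at h2
    rw [← h2]
    rw [mul_one]
  -- Part 1 : traces of elements of A' lie in A
  have htr : ∀ z : L', z ∈ A' → Algebra.trace L L' z ∈ A := by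
    have key : ∀ z ∈ B, ∀ u : L', u ∈ integralClosure ℤ_[p] L' →
        Algebra.trace L L' (u * z) ∈ A := by
      intro z hz
      refine Submodule.span_induction ?_ ?_ ?_ ?_ hz
      · rintro x ⟨a, ha, rfl⟩ u hu
        have : u * algebraMap L L' a = algebraMap L L' a * u := mul_comm _ _
        rw [this, hsmul_tr a u]
        have heq2 : a * Algebra.trace L L' u =
            (⟨Algebra.trace L L' u, Algebra.isIntegral_trace hu⟩ :
              integralClosure ℤ_[p] L) • a := by
          rw [Algebra.smul_def]
          show _ = Algebra.trace L L' u * a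
          ring
        rw [heq2]
        exact Submodule.smul_mem _ _ ha
      · intro u hu
        rw [mul_zero, map_zero]
        exact zero_mem _
      · intro x y hx hy ihx ihy u hu
        rw [mul_add, map_add]
        exact add_mem (ihx u hu) (ihy u hu)
      · intro o x hx ih u hu
        have heq : u * (o • x) = ((o : L') * u) * x := by
          rw [Algebra.smul_def]
          show u * ((o : L') * x) = _
          ring
        rw [heq]
        exact ih _ (mul_mem o.2 hu)
    intro z hz
    rw [hA'B] at hz
    have := key z hz 1 (one_mem _)
    rwa [one_mul] at this
  refine ⟨htr, by rw [hA'B], ?_⟩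
  intro x' hx' hNIB horth
  set x := Algebra.trace L L' x' with hxdef
  have hcomm : ∀ (σ : L' ≃ₐ[K] L') (c : L),
      σ (algebraMap L L' c) = algebraMap L L' (AlgEquiv.restrictNormalHom L σ c) :=
    fun σ c => (AlgEquiv.restrictNormal_commutes σ L c).symm
  have hker : ∀ s : L' ≃ₐ[L] L',
      AlgEquiv.restrictNormalHom L (s.restrictScalars K) = 1 := by
    intro s
    refine AlgEquiv.ext fun c => (algebraMap L L').injective ?_
    rw [← hcomm]
    show s (algebraMap L L' c) = algebraMap L L' ((1 : L ≃ₐ[K] L) c)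
    rw [s.commutes c]
    rfl
  have hswap : ∀ (s : L' ≃ₐ[L] L') (σ : L' ≃ₐ[K] L') (z : L'), s (σ z) = σ (s z) := by
    intro s σ z
    have h2 := DFunLike.congr_fun (hab' (s.restrictScalars K) σ) z
    simpa using h2
  have htr_equiv : ∀ (σ : L' ≃ₐ[K] L') (z : L'),
      Algebra.trace L L' (σ z) = (AlgEquiv.restrictNormalHom L σ) (Algebra.trace L L' z) := by
    intro σ z
    apply (algebraMap L L').injective
    rw [trace_eq_sum_automorphisms, ← hcomm, trace_eq_sum_automorphisms, map_sum]
    exact Finset.sum_congr rfl fun s _ => hswap s σ z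
  have hsurj := AlgEquiv.restrictNormalHom_surjective
    (F := K) (K₁ := L) (E := L')
  choose lift hlift using hsurj
  have hgx : ∀ g : L ≃ₐ[K] L, Algebra.trace L L' (lift g x') = g x := by
    intro g
    rw [htr_equiv (lift g) x', hlift g]
  -- orthonormality for L/K
  have horthL : ∀ g h : L ≃ₐ[K] L,
      Algebra.trace K L (g x * h x) = if g = h then 1 else 0 := by
    intro g h
    have step1 : g x * h x = Algebra.trace L L' (algebraMap L L' (h x) * lift g x') := by
      rw [hsmul_tr (h x) (lift g x'), hgx g]
      ring
    rw [step1, Algebra.trace_trace]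
    have step2 : algebraMap L L' (h x) = ∑ s : L' ≃ₐ[L] L', s (lift h x') := by
      rw [← hgx h, trace_eq_sum_automorphisms]
    rw [step2, Finset.sum_mul, map_sum]
    have step3 : ∀ s : L' ≃ₐ[L] L',
        Algebra.trace K L' (s (lift h x') * lift g x')
          = if (s.restrictScalars K) * lift h = lift g then 1 else 0 := by
      intro s
      have hre : s (lift h x') = ((s.restrictScalars K) * lift h) x' := rfl
      rw [hre, horth]
    rw [Finset.sum_congr rfl fun s _ => step3 s]
    by_cases hgh : g = h
    · subst hgh
      have hcond : ∀ s : L' ≃ₐ[L] L',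
          ((s.restrictScalars K) * lift g = lift g) ↔ s = 1 := by
        intro s
        constructor
        · intro hs
          have h1 : s.restrictScalars K = 1 := by
            have h0 : (s.restrictScalars K) * lift g = 1 * lift g := by
              rw [hs, one_mul]
            exact mul_right_cancel h0
          refine AlgEquiv.ext fun w => ?_
          have h2 := DFunLike.congr_fun h1 w
          simpa using h2
        · rintro rfl
          have h1 : ((1 : L' ≃ₐ[L] L').restrictScalars K) = 1 := rfl
          rw [h1, one_mul]
      simp_rw [hcond]
      rw [Finset.sum_ite_eq' Finset.univ (1 : L' ≃ₐ[L] L') (fun _ => (1 : K))]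
      simp
    · have hcond : ∀ s : L' ≃ₐ[L] L',
          ¬ ((s.restrictScalars K) * lift h = lift g) := by
        intro s hs
        apply hgh
        have h1 := congrArg (AlgEquiv.restrictNormalHom L) hs
        rw [map_mul, hker, one_mul, hlift, hlift] at h1
        exact h1.symm
      simp [hcond, hgh]
  -- each g x lies in A
  have hgxA : ∀ g : L ≃ₐ[K] L, g x ∈ A := by
    intro g
    have hmem : lift g x' ∈ A' := by
      have hmem' : lift g x' ∈ (A' : Set L') := by
        rw [hNIB]
        refine ⟨fun σ => if σ = lift g then 1 else 0, fun σ => ?_, ?_⟩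
        · by_cases hσ : σ = lift g <;> simp [hσ, Subalgebra.one_mem, Subalgebra.zero_mem]
        · simp [ite_smul]
      exact hmem'
    rw [← hgx g]
    exact htr _ hmem
  -- pairing computation
  have hpair : ∀ (c : (L ≃ₐ[K] L) → K) (h : L ≃ₐ[K] L),
      Algebra.trace K L ((∑ g, c g • g x) * h x) = c h := by
    intro c h
    rw [Finset.sum_mul, map_sum]
    have hterm : ∀ g : L ≃ₐ[K] L,
        Algebra.trace K L ((c g • g x) * h x) = if g = h then c g else 0 := by
      intro g
      rw [smul_mul_assoc, map_smul, horthL, smul_eq_mul]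
      simp [mul_ite]
    rw [Finset.sum_congr rfl fun g _ => hterm g,
      Finset.sum_ite_eq' Finset.univ h c]
    simp
  have li : LinearIndependent K (fun g : L ≃ₐ[K] L => g x) := by
    rw [Fintype.linearIndependent_iff]
    intro c hc h
    have h1 := hpair c h
    rw [hc, zero_mul, map_zero] at h1
    exact h1.symm
  have hcard : Fintype.card (L ≃ₐ[K] L) = Module.finrank K L :=
    Fintype.card_eq_nat_card.trans (IsGalois.card_aut_eq_finrank K L)
  set bas := basisOfLinearIndependentOfCardEqFinrank li hcard with hbasdef
  have hbas : ∀ g, bas g = g x := fun g =>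
    congrFun (coe_basisOfLinearIndependentOfCardEqFinrank li hcard) g
  have hAset : (A : Set L) = {z : L | ∃ c : (L ≃ₐ[K] L) → K,
      (∀ g, c g ∈ integralClosure ℤ_[p] K) ∧ z = ∑ g, c g • g x} := by
    ext z
    constructor
    · intro hz
      have hz_exp : z = ∑ g, bas.repr z g • g x := by
        conv_lhs => rw [← bas.sum_repr z]
        exact Finset.sum_congr rfl fun g _ => by rw [hbas]
      have hrepr : ∀ h : L ≃ₐ[K] L,
          Algebra.trace K L (z * h x) = bas.repr z h := by
        intro h
        calc Algebra.trace K L (z * h x)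
            = Algebra.trace K L ((∑ g, bas.repr z g • g x) * h x) := by
              conv_lhs => rw [hz_exp]
          _ = bas.repr z h := hpair _ h
      refine ⟨fun g => Algebra.trace K L (z * g x), fun g => ?_, ?_⟩
      · have h1 := (hA _).mp (Submodule.mul_mem_mul hz (hgxA g)) 1 (one_mem _)
        rwa [mul_one] at h1
      · conv_lhs => rw [hz_exp]
        refine Finset.sum_congr rfl fun g _ => ?_
        show (bas.repr z) g • g x = Algebra.trace K L (z * g x) • g x
        rw [hrepr g]
    · rintro ⟨c, hc, rfl⟩
      refine Submodule.sum_mem _ fun g _ => ?_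
      have heq : c g • g x = (⟨algebraMap K L (c g),
          IsIntegral.map (IsScalarTower.toAlgHom ℤ_[p] K L) (hc g)⟩ :
          integralClosure ℤ_[p] L) • (g x) := by
        rw [Algebra.smul_def]
        show _ = algebraMap K L (c g) * g x
        rfl
      rw [heq]
      exact Submodule.smul_mem _ _ (hgxA g)
  exact ⟨htr x' hx', hAset, horthL⟩
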